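/- Let ρ_{31}, ρ_{32}, ρ_{41}, ρ_{42}, ρ_{j1}, ρ_{j2}, ρ_{k1}, ρ_{k2}, χ, σ₁₂ be real numbers with ρ_{31} ≠ 0 and ρ_{41} ≠ 0. Define q := ρ_{31}ρ_{41}ρ_{j2}ρ_{k2} − ρ_{32}ρ_{42}ρ_{j1}ρ_{k1}, r := ρ_{32}ρ_{42}ρ_{j1}ρ_{k2} + ρ_{32}ρ_{42}ρ_{j2}ρ_{k1} − ρ_{31}ρ_{42}ρ_{j2}ρ_{k2} − ρ_{32}ρ_{41}ρ_{j2}ρ_{k2}, and τ_{jk}(β) := [βq + σ₁₂r + χ(βρ_{k1} − σ₁₂ρ_{k2})(βρ_{j1} − σ₁₂ρ_{j2})] / [(βρ_{31} − σ₁₂ρ_{32})(βρ_{41} − σ₁₂ρ_{42})] on the domain D := {β ∈ ℝ : (βρ_{31} − σ₁₂ρ_{32})(βρ_{41} − σ₁₂ρ_{42}) ≠ 0}. Assume (ρ_{j2}ρ_{41} − ρ_{j1}ρ_{42})(ρ_{32}ρ_{41} − χσ₁₂) = 0 and (ρ_{k2}ρ_{31} − ρ_{k1}ρ_{32})(ρ_{31}ρ_{42}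 − χσ₁₂) = 0. Then τ_{jk} is injective on D if and only if (ρ_{j2}ρ_{41} − ρ_{j1}ρ_{42})(ρ_{k2}ρ_{31} − ρ_{k1}ρ_{32}) ≠ 0. (Proposition 1, third part.) -/

import Mathlib

private theorem not_injOn_const_aux (a b c d s k : ℝ) (ha : a ≠ 0) (hc : c ≠ 0)
    (τ : ℝ → ℝ)
    (hconst : ∀ β : ℝ, (β * a - s * b) * (β * c - s * d) ≠ 0 → τ β = k) :
    ¬ Set.InjOn τ {β : ℝ | (β * a - s * b) * (β * c - s * d) ≠ 0} := by
  have hmem : ∀ β : ℝ, max (s * b / a) (s * d / c) < β →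
      (β * a - s * b) * (β * c - s * d) ≠ 0 := by
    intro β hβ
    have hA : β * a - s * b ≠ 0 := by
      intro h0
      have hβ1 : β = s * b / a := by rw [eq_div_iff ha]; linarith
      have h2 := le_max_left (s * b / a) (s * d / c)
      rw [hβ1] at hβ; linarith
    have hB : β * c - s * d ≠ 0 := by
      intro h0
      have hβ1 : β = s * d / c := by rw [eq_div_iff hc]; linarith
      have h2 := le_max_right (s * b / a) (s * d / c)
      rw [hβ1] at hβ; linarith
    exact mul_ne_zero hA hB
  intro hinj
  set M := max (s * b / a) (s * d / c) with hM
  have h1 : (M + 1) ∈ {β : ℝ | (β * a - s * b) * (β * c - s * d) ≠ 0} :=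
    hmem _ (by linarith)
  have h2 : (M + 2) ∈ {β : ℝ | (β * a - s * b) * (β * c - s * d) ≠ 0} :=
    hmem _ (by linarith)
  have h12 : (M + 1 : ℝ) = M + 2 :=
    hinj h1 h2 (by rw [hconst _ h1, hconst _ h2])
  linarith

set_option maxHeartbeats 1000000 in
theorem taujk_invertible_iff (ρ31 ρ32 ρ41 ρ42 ρj1 ρj2 ρk1 ρk2 χ s12 q r : ℝ)
    (h31 : ρ31 ≠ 0) (h41 : ρ41 ≠ 0)
    (hq : q = ρ31 * ρ41 * ρj2 * ρk2 - ρ32 * ρ42 * ρj1 * ρk1)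
    (hr : r = ρ32 * ρ42 * ρj1 * ρk2 + ρ32 * ρ42 * ρj2 * ρk1
              - ρ31 * ρ42 * ρj2 * ρk2 - ρ32 * ρ41 * ρj2 * ρk2)
    (hs1 : (ρj2 * ρ41 - ρj1 * ρ42) * (ρ32 * ρ41 - χ * s12) = 0)
    (hs2 : (ρk2 * ρ31 - ρk1 * ρ32) * (ρ31 * ρ42 - χ * s12) = 0) :
    let τ : ℝ → ℝ := fun β =>
      (β * q + s12 * r + χ * (β * ρk1 - s12 * ρk2) * (β * ρj1 - s12 * ρj2)) /
        ((β * ρ31 - s12 * ρ32) * (β * ρ41 - s12 * ρ42))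
    let D : Set ℝ := {β | (β * ρ31 - s12 * ρ32) * (β * ρ41 - s12 * ρ42) ≠ 0}
    Set.InjOn τ D ↔ (ρj2 * ρ41 - ρj1 * ρ42) * (ρk2 * ρ31 - ρk1 * ρ32) ≠ 0 := by
  subst hq
  subst hr
  intro τ D
  have hτdef : ∀ β : ℝ, τ β =
      (β * (ρ31 * ρ41 * ρj2 * ρk2 - ρ32 * ρ42 * ρj1 * ρk1)
        + s12 * (ρ32 * ρ42 * ρj1 * ρk2 + ρ32 * ρ42 * ρj2 * ρk1
              - ρ31 * ρ42 * ρj2 * ρk2 - ρ32 * ρ41 * ρj2 * ρk2)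
        + χ * (β * ρk1 - s12 * ρk2) * (β * ρj1 - s12 * ρj2)) /
        ((β * ρ31 - s12 * ρ32) * (β * ρ41 - s12 * ρ42)) := fun _ => rfl
  have hDdef : D = {β : ℝ | (β * ρ31 - s12 * ρ32) * (β * ρ41 - s12 * ρ42) ≠ 0} := rfl
  constructor
  · -- injective → J*K ≠ 0 : contrapositive, τ is constant when J = 0 or K = 0
    intro hinj hJK
    refine absurd hinj ?_
    rw [hDdef]
    rcases mul_eq_zero.mp hJK with hJ | hK
    · rcases mul_eq_zero.mp hs2 with hK | had
      · -- J = 0 and K = 0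
        have hf : ρj2 = ρj1 * ρ42 / ρ41 := by
          field_simp
          linear_combination hJ
        subst hf
        have hh : ρk2 = ρk1 * ρ32 / ρ31 := by
          field_simp
          linear_combination hK
        subst hh
        refine not_injOn_const_aux _ _ _ _ _ (χ * ρj1 * ρk1 / (ρ31 * ρ41)) h31 h41 τ ?_
        intro β hβ
        rw [hτdef, div_eq_iff hβ]
        field_simp
        ring
      · -- J = 0 and ρ31 ρ42 = χ s12
        have hd : ρ42 = χ * s12 / ρ31 := by
          field_simp
          linear_combination had
        subst hd
        have hf : ρj2 = ρj1 * (χ * s12 / ρ31) / ρ41 := by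
          field_simp at hJ ⊢
          linear_combination hJ
        subst hf
        refine not_injOn_const_aux _ _ _ _ _ (χ * ρj1 * ρk1 / (ρ31 * ρ41)) h31 h41 τ ?_
        intro β hβ
        rw [hτdef, div_eq_iff hβ]
        field_simp
        ring
    · rcases mul_eq_zero.mp hs1 with hJ | hbc
      · -- J = 0 and K = 0 again
        have hf : ρj2 = ρj1 * ρ42 / ρ41 := by
          field_simp
          linear_combination hJ
        subst hf
        have hh : ρk2 = ρk1 * ρ32 / ρ31 := by
          field_simp
          linear_combination hK
        subst hh
        refine not_injOn_const_aux _ _ _ _ _ (χ * ρj1 * ρk1 / (ρ31 * ρ41)) h31 h41 τ ?_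
        intro β hβ
        rw [hτdef, div_eq_iff hβ]
        field_simp
        ring
      · -- K = 0 and ρ32 ρ41 = χ s12
        have hb : ρ32 = χ * s12 / ρ41 := by
          field_simp
          linear_combination hbc
        subst hb
        have hh : ρk2 = ρk1 * (χ * s12 / ρ41) / ρ31 := by
          field_simp at hK ⊢
          linear_combination hK
        subst hh
        refine not_injOn_const_aux _ _ _ _ _ (χ * ρj1 * ρk1 / (ρ31 * ρ41)) h31 h41 τ ?_
        intro β hβ
        rw [hτdef, div_eq_iff hβ]
        field_simp
        ring
  · -- J*K ≠ 0 → injective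
    intro hJK
    have hJ : ρj2 * ρ41 - ρj1 * ρ42 ≠ 0 := left_ne_zero_of_mul hJK
    have hK : ρk2 * ρ31 - ρk1 * ρ32 ≠ 0 := right_ne_zero_of_mul hJK
    have hbc : ρ32 * ρ41 - χ * s12 = 0 := (mul_eq_zero.mp hs1).resolve_left hJ
    have had : ρ31 * ρ42 - χ * s12 = 0 := (mul_eq_zero.mp hs2).resolve_left hK
    have hb : ρ32 = χ * s12 / ρ41 := by
      field_simp
      linear_combination hbc
    subst hb
    have hd : ρ42 = χ * s12 / ρ31 := by
      field_simp
      linear_combination had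
    subst hd
    intro β1 h1 β2 h2 heq
    have h1' : (β1 * ρ31 - s12 * (χ * s12 / ρ41)) * (β1 * ρ41 - s12 * (χ * s12 / ρ31)) ≠ 0 := h1
    have h2' : (β2 * ρ31 - s12 * (χ * s12 / ρ41)) * (β2 * ρ41 - s12 * (χ * s12 / ρ31)) ≠ 0 := h2
    have hm1 : ρ31 * ρ41 * β1 - χ * s12 ^ 2 ≠ 0 := by
      intro h0
      apply h1'
      have e1 : β1 * ρ31 - s12 * (χ * s12 / ρ41) = 0 := by
        field_simp
        linear_combination h0
      rw [e1, zero_mul]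
    have hm2 : ρ31 * ρ41 * β2 - χ * s12 ^ 2 ≠ 0 := by
      intro h0
      apply h2'
      have e1 : β2 * ρ31 - s12 * (χ * s12 / ρ41) = 0 := by
        field_simp
        linear_combination h0
      rw [e1, zero_mul]
    have form : ∀ β : ℝ,
        (β * ρ31 - s12 * (χ * s12 / ρ41)) * (β * ρ41 - s12 * (χ * s12 / ρ31)) ≠ 0 →
        ρ31 * ρ41 * β - χ * s12 ^ 2 ≠ 0 →
        τ β = χ * ρj1 * ρk1 / (ρ31 * ρ41)
          + (ρj2 * ρ41 - ρj1 * (χ * s12 / ρ31)) * (ρk2 * ρ31 - ρk1 * (χ * s12 / ρ41))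
            / (ρ31 * ρ41 * β - χ * s12 ^ 2) := by
      intro β hβ hm
      rw [hτdef, div_eq_iff hβ]
      rw [div_add_div _ _ (mul_ne_zero h31 h41) hm, div_mul_eq_mul_div _ (ρ31 * ρ41 * (ρ31 * ρ41 * β - χ * s12 ^ 2)), eq_div_iff (mul_ne_zero (mul_ne_zero h31 h41) hm)]
      field_simp
      ring
    rw [form β1 h1' hm1, form β2 h2' hm2] at heq
    have heq2 := add_left_cancel heq
    rw [div_eq_div_iff hm1 hm2] at heq2
    have hmeq := mul_left_cancel₀ hJK heq2
    have hac : ρ31 * ρ41 ≠ 0 := mul_ne_zero h31 h41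
    exact mul_left_cancel₀ hac (by linarith)
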